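/- Let μ ≥ 2 be an even integer, ζ > 0, V > 0, and set c₀ = cos²(π/μ)·ζ/V². Let f_Y(y) = (1/π)·√(V²/(ζy − V²y²)) for y ∈ (0, ζ/V²) (zero elsewhere) with CDF F_Y(Y) = ∫_0^Y f_Y(y) dy, and let f_α(α) = (μ/(2π))·√(V²/(ζα − V²α²)) for α ∈ (c₀, ζ/V²) (zero elsewhere) with CDF F_α(Y) = ∫_0^Y f_α(y) dy. Then: (i) for 0 < Y ≤ c₀, F_Y(Y) − F_α(Y) = ∫_0^Y f_Y(y) dy; (ii) for c₀ < Y < ζ/V², F_Y(Y) − F_α(Y) = (μ/2 − 1)·∫_Y^{ζ/V²} f_Y(y) dy; and in both cases F_Y(Y) − F_α(Y) ≥ 0. -/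

import Mathlib

open Real

/-- Density of the per-user CUMA interference power (Corollary 1):
`(1/π)·√(V²/(ζy − V²y²))` on `(0, ζ/V²)` and `0` otherwise. -/
noncomputable def interferenceDensity (ζ V y : ℝ) : ℝ :=
  if y ∈ Set.Ioo 0 (ζ / V ^ 2)
  then 1 / π * Real.sqrt (V ^ 2 / (ζ * y - V ^ 2 * y ^ 2))
  else 0

/-- Density of the received CUMA signal power (Theorem 2):
`(μ/(2π))·√(V²/(ζα − V²α²))` on `(cos²(π/μ)ζ/V², ζ/V²)` and `0` otherwise. -/
noncomputable def signalDensity (μ : ℕ) (ζ V α : ℝ) : ℝ :=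
  if α ∈ Set.Ioo (Real.cos (π / μ) ^ 2 * ζ / V ^ 2) (ζ / V ^ 2)
  then μ / (2 * π) * Real.sqrt (V ^ 2 / (ζ * α - V ^ 2 * α ^ 2))
  else 0

open Real MeasureTheory intervalIntegral Set

/-- Antiderivative of the arcsine density on `(0, b)`. -/
noncomputable def cumaG (b y : ℝ) : ℝ := 2 / π * Real.arcsin (Real.sqrt (y / b))

lemma cumaG_cont (b : ℝ) : Continuous (cumaG b) := by
  unfold cumaG
  exact continuous_const.mul
    (Real.continuous_arcsin.comp (Real.continuous_sqrt.comp (continuous_id.div_const b)))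

lemma cumaG_zero (b : ℝ) : cumaG b 0 = 0 := by simp [cumaG]

lemma cumaG_self {b : ℝ} (hb : 0 < b) : cumaG b b = 1 := by
  rw [cumaG, div_self hb.ne', Real.sqrt_one, Real.arcsin_one]
  field_simp

lemma cumaG_hasDerivAt {b : ℝ} (hb : 0 < b) {y : ℝ} (hy : y ∈ Set.Ioo 0 b) :
    HasDerivAt (cumaG b) (1 / (π * Real.sqrt (y * (b - y)))) y := by
  obtain ⟨hy0, hyb⟩ := hy
  have hby : 0 < b - y := sub_pos.2 hyb
  have h1 : HasDerivAt (fun y : ℝ => y / b) (1 / b) y := by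
    simpa using (hasDerivAt_id y).div_const b
  have h2 : HasDerivAt (fun y : ℝ => Real.sqrt (y / b))
      (1 / (2 * Real.sqrt (y / b)) * (1 / b)) y :=
    (Real.hasDerivAt_sqrt (ne_of_gt (div_pos hy0 hb))).comp y h1
  have hs1 : Real.sqrt (y / b) < 1 := by
    rw [show (1:ℝ) = Real.sqrt 1 by simp]
    exact Real.sqrt_lt_sqrt (by positivity) ((div_lt_one hb).2 hyb)
  have hs0 : 0 < Real.sqrt (y / b) := Real.sqrt_pos.2 (div_pos hy0 hb)
  have h3 : HasDerivAt Real.arcsin (1 / Real.sqrt (1 - Real.sqrt (y / b) ^ 2))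
      (Real.sqrt (y / b)) :=
    Real.hasDerivAt_arcsin (by linarith) (ne_of_lt hs1)
  have h4 : HasDerivAt (cumaG b)
      (2 / π * (1 / Real.sqrt (1 - Real.sqrt (y / b) ^ 2) * (1 / (2 * Real.sqrt (y / b)) * (1 / b)))) y :=
    ((h3.comp y h2).const_mul (2 / π))
  convert h4 using 1
  have e1 : Real.sqrt (y / b) ^ 2 = y / b := Real.sq_sqrt (by positivity)
  have e2 : 1 - y / b = (b - y) / b := by field_simp
  have e3 : Real.sqrt ((b - y) / b) = Real.sqrt (b - y) / Real.sqrt b :=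
    Real.sqrt_div hby.le b
  have e4 : Real.sqrt (y / b) = Real.sqrt y / Real.sqrt b := Real.sqrt_div hy0.le b
  have e5 : Real.sqrt (y * (b - y)) = Real.sqrt y * Real.sqrt (b - y) :=
    Real.sqrt_mul hy0.le _
  have hsb : Real.sqrt b * Real.sqrt b = b := Real.mul_self_sqrt hb.le
  have hsbpos : 0 < Real.sqrt b := Real.sqrt_pos.2 hb
  have hsypos : 0 < Real.sqrt y := Real.sqrt_pos.2 hy0
  have hstpos : 0 < Real.sqrt (b - y) := Real.sqrt_pos.2 hby
  rw [e1, e2, e3, e4, e5]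
  have hπ := Real.pi_pos
  field_simp
  nlinarith [hsb, hsbpos, hsypos, hstpos, hπ]

lemma sqrt_formula {ζ V : ℝ} (hζ : 0 < ζ) (hV : 0 < V) {y : ℝ}
    (hy : y ∈ Set.Ioo 0 (ζ / V ^ 2)) :
    Real.sqrt (V ^ 2 / (ζ * y - V ^ 2 * y ^ 2))
      = 1 / Real.sqrt (y * (ζ / V ^ 2 - y)) := by
  have hA : 0 < y * (ζ / V ^ 2 - y) := mul_pos hy.1 (sub_pos.2 hy.2)
  have hden : ζ * y - V ^ 2 * y ^ 2 = V ^ 2 * (y * (ζ / V ^ 2 - y)) := by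
    field_simp
  have hdpos : 0 < ζ * y - V ^ 2 * y ^ 2 := by
    rw [hden]; positivity
  have h2 : V ^ 2 / (ζ * y - V ^ 2 * y ^ 2) = (y * (ζ / V ^ 2 - y))⁻¹ := by
    rw [hden]
    field_simp
  rw [h2, Real.sqrt_inv, one_div]

lemma interf_eq {ζ V : ℝ} (hζ : 0 < ζ) (hV : 0 < V) {y : ℝ}
    (hy : y ∈ Set.Ioo 0 (ζ / V ^ 2)) :
    interferenceDensity ζ V y = 1 / (π * Real.sqrt (y * (ζ / V ^ 2 - y))) := by
  rw [interferenceDensity, if_pos hy, sqrt_formula hζ hV hy]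
  ring

lemma interf_nonneg (ζ V y : ℝ) : 0 ≤ interferenceDensity ζ V y := by
  rw [interferenceDensity]
  split
  · have := Real.pi_pos
    positivity
  · exact le_rfl

lemma key_ineq {b : ℝ} (hb : 0 < b) {y : ℝ} (hy : y ∈ Set.Ioo 0 b) :
    1 / Real.sqrt (y * (b - y))
      ≤ Real.sqrt (2 / b) * (1 / Real.sqrt y + 1 / Real.sqrt (b - y)) := by
  obtain ⟨hy0, hyb⟩ := hy
  have hby : 0 < b - y := sub_pos.2 hyb
  have hsq : Real.sqrt (2 / b) = (Real.sqrt (b / 2))⁻¹ := by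
    rw [show (2 : ℝ) / b = (b / 2)⁻¹ by field_simp, Real.sqrt_inv]
  have hsypos : 0 < Real.sqrt y := Real.sqrt_pos.2 hy0
  have hstpos : 0 < Real.sqrt (b - y) := Real.sqrt_pos.2 hby
  have hsb2 : 0 < Real.sqrt (b / 2) := Real.sqrt_pos.2 (by positivity)
  rcases le_or_gt y (b / 2) with h | h
  · have hle : y * (b / 2) ≤ y * (b - y) := by nlinarith
    have h1 : 1 / Real.sqrt (y * (b - y)) ≤ 1 / Real.sqrt (y * (b / 2)) :=
      one_div_le_one_div_of_le (Real.sqrt_pos.2 (by positivity)) (Real.sqrt_le_sqrt hle)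
    have h2 : Real.sqrt (y * (b / 2)) = Real.sqrt y * Real.sqrt (b / 2) :=
      Real.sqrt_mul hy0.le _
    calc 1 / Real.sqrt (y * (b - y)) ≤ 1 / (Real.sqrt y * Real.sqrt (b / 2)) := by
            rw [← h2]; exact h1
      _ = Real.sqrt (2 / b) * (1 / Real.sqrt y) := by rw [hsq]; field_simp
      _ ≤ Real.sqrt (2 / b) * (1 / Real.sqrt y + 1 / Real.sqrt (b - y)) := by
            have : (0:ℝ) ≤ Real.sqrt (2 / b) := Real.sqrt_nonneg _
            nlinarith [one_div_pos.2 hstpos]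
  · have hle : (b / 2) * (b - y) ≤ y * (b - y) := by nlinarith
    have h1 : 1 / Real.sqrt (y * (b - y)) ≤ 1 / Real.sqrt ((b / 2) * (b - y)) :=
      one_div_le_one_div_of_le (Real.sqrt_pos.2 (by positivity)) (Real.sqrt_le_sqrt hle)
    have h2 : Real.sqrt ((b / 2) * (b - y)) = Real.sqrt (b / 2) * Real.sqrt (b - y) :=
      Real.sqrt_mul (by positivity) _
    calc 1 / Real.sqrt (y * (b - y)) ≤ 1 / (Real.sqrt (b / 2) * Real.sqrt (b - y)) := by
            rw [← h2]; exact h1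
      _ = Real.sqrt (2 / b) * (1 / Real.sqrt (b - y)) := by rw [hsq]; field_simp
      _ ≤ Real.sqrt (2 / b) * (1 / Real.sqrt y + 1 / Real.sqrt (b - y)) := by
            have : (0:ℝ) ≤ Real.sqrt (2 / b) := Real.sqrt_nonneg _
            nlinarith [one_div_pos.2 hsypos]

lemma interf_integrable {ζ V : ℝ} (hζ : 0 < ζ) (hV : 0 < V) :
    Integrable (interferenceDensity ζ V) := by
  have hb : 0 < ζ / V ^ 2 := div_pos hζ (pow_pos hV 2)
  set b := ζ / V ^ 2 with hbdef
  have hind : interferenceDensity ζ V = Set.indicator (Set.Ioo 0 b)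
      (fun y => 1 / π * Real.sqrt (V ^ 2 / (ζ * y - V ^ 2 * y ^ 2))) := by
    funext y; rw [Set.indicator_apply, interferenceDensity]
  rw [hind, integrable_indicator_iff measurableSet_Ioo]
  have hr : (-1 : ℝ) < -(1/2 : ℝ) := by norm_num
  have hint1 : IntegrableOn (fun y : ℝ => y ^ (-(1/2) : ℝ)) (Set.Ioo 0 b) := by
    exact (intervalIntegral.intervalIntegrable_rpow' (a := 0) (b := b) hr).1.mono_set
      Set.Ioo_subset_Ioc_self
  have hint2 : IntegrableOn (fun y : ℝ => (b - y) ^ (-(1/2) : ℝ)) (Set.Ioo 0 b) := by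
    have h := (intervalIntegral.intervalIntegrable_rpow' (a := 0) (b := b) hr).comp_sub_left b
    simp only [sub_self, sub_zero] at h
    exact h.2.mono_set Set.Ioo_subset_Ioc_self
  have hbound : IntegrableOn
      (fun y : ℝ => Real.sqrt (2 / b) / π * (y ^ (-(1/2) : ℝ) + (b - y) ^ (-(1/2) : ℝ)))
      (Set.Ioo 0 b) := (hint1.add hint2).const_mul _
  apply Integrable.mono' hbound
  · apply Measurable.aestronglyMeasurable
    have hpoly : Measurable fun y : ℝ => ζ * y - V ^ 2 * y ^ 2 := by
      have hc : Continuous fun y : ℝ => ζ * y - V ^ 2 * y ^ 2 := by continuity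
      exact hc.measurable
    exact measurable_const.mul
      (Real.continuous_sqrt.measurable.comp (measurable_const.div hpoly))
  · filter_upwards [ae_restrict_mem measurableSet_Ioo] with y hy
    have h0 : 0 ≤ 1 / π * Real.sqrt (V ^ 2 / (ζ * y - V ^ 2 * y ^ 2)) := by
      have := Real.pi_pos; positivity
    rw [Real.norm_eq_abs, abs_of_nonneg h0]
    have hfy : 1 / π * Real.sqrt (V ^ 2 / (ζ * y - V ^ 2 * y ^ 2))
        = 1 / π * (1 / Real.sqrt (y * (b - y))) := by
      rw [sqrt_formula hζ hV hy]
    have hrw1 : y ^ (-(1/2) : ℝ) = 1 / Real.sqrt y := by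
      rw [Real.rpow_neg hy.1.le, Real.sqrt_eq_rpow]
      exact (one_div _).symm
    have hrw2 : (b - y) ^ (-(1/2) : ℝ) = 1 / Real.sqrt (b - y) := by
      rw [Real.rpow_neg (sub_pos.2 hy.2).le, Real.sqrt_eq_rpow]
      exact (one_div _).symm
    rw [hfy, hrw1, hrw2]
    have hk := key_ineq hb hy
    have hπ : (0:ℝ) < 1 / π := by have := Real.pi_pos; positivity
    calc 1 / π * (1 / Real.sqrt (y * (b - y)))
        ≤ 1 / π * (Real.sqrt (2 / b) * (1 / Real.sqrt y + 1 / Real.sqrt (b - y))) :=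
          mul_le_mul_of_nonneg_left hk hπ.le
      _ = Real.sqrt (2 / b) / π * (1 / Real.sqrt y + 1 / Real.sqrt (b - y)) := by ring

lemma interf_integral {ζ V : ℝ} (hζ : 0 < ζ) (hV : 0 < V) {Y₁ Y₂ : ℝ}
    (h0 : 0 ≤ Y₁) (h12 : Y₁ ≤ Y₂) (h2 : Y₂ ≤ ζ / V ^ 2) :
    ∫ y in Y₁..Y₂, interferenceDensity ζ V y
      = cumaG (ζ / V ^ 2) Y₂ - cumaG (ζ / V ^ 2) Y₁ := by
  have hb : 0 < ζ / V ^ 2 := div_pos hζ (pow_pos hV 2)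
  apply intervalIntegral.integral_eq_sub_of_hasDeriv_right_of_le h12
    (cumaG_cont _).continuousOn
  · intro x hx
    have hx' : x ∈ Set.Ioo 0 (ζ / V ^ 2) :=
      ⟨lt_of_le_of_lt h0 hx.1, lt_of_lt_of_le hx.2 h2⟩
    rw [interf_eq hζ hV hx']
    exact (cumaG_hasDerivAt hb hx').hasDerivWithinAt
  · exact (interf_integrable hζ hV).intervalIntegrable

lemma cumaG_c0 {b : ℝ} (hb : 0 < b) {μ : ℕ} (hμ2 : 2 ≤ μ) :
    cumaG b (Real.cos (π / μ) ^ 2 * b) = 1 - 2 / μ := by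
  have hμ0 : (0:ℝ) < μ := by positivity
  have hπ := Real.pi_pos
  have hle : π / μ ≤ π / 2 := by
    apply div_le_div_of_nonneg_left hπ.le (by norm_num)
    · exact_mod_cast hμ2
  have hpos : 0 ≤ π / μ := by positivity
  have hcos : 0 ≤ Real.cos (π / μ) :=
    Real.cos_nonneg_of_mem_Icc ⟨by linarith, hle⟩
  rw [cumaG, show Real.cos (π / μ) ^ 2 * b / b = Real.cos (π / μ) ^ 2 by field_simp,
    Real.sqrt_sq hcos, ← Real.sin_pi_div_two_sub,
    Real.arcsin_sin (by linarith) (by linarith)]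
  field_simp

lemma sig_indicator {μ : ℕ} {ζ V : ℝ} (hζ : 0 < ζ) (hV : 0 < V) :
    signalDensity μ ζ V = Set.indicator
      (Set.Ioo (Real.cos (π / μ) ^ 2 * ζ / V ^ 2) (ζ / V ^ 2))
      (fun y => (μ : ℝ) / 2 * interferenceDensity ζ V y) := by
  have hc0 : 0 ≤ Real.cos (π / μ) ^ 2 * ζ / V ^ 2 := by positivity
  funext y
  rw [Set.indicator_apply, signalDensity]
  by_cases h : y ∈ Set.Ioo (Real.cos (π / μ) ^ 2 * ζ / V ^ 2) (ζ / V ^ 2)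
  · rw [if_pos h, if_pos h, interferenceDensity,
      if_pos (show y ∈ Set.Ioo 0 (ζ / V ^ 2) from ⟨lt_of_le_of_lt hc0 h.1, h.2⟩)]
    ring
  · rw [if_neg h, if_neg h]

lemma sig_integrable {μ : ℕ} {ζ V : ℝ} (hζ : 0 < ζ) (hV : 0 < V) :
    Integrable (signalDensity μ ζ V) := by
  rw [sig_indicator hζ hV, integrable_indicator_iff measurableSet_Ioo]
  exact (((interf_integrable hζ hV).const_mul _)).integrableOn

lemma sig_zero_upto {μ : ℕ} {ζ V : ℝ} {Y : ℝ}
    (hYc : Y ≤ Real.cos (π / μ) ^ 2 * ζ / V ^ 2)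
    (hc0 : 0 ≤ Real.cos (π / μ) ^ 2 * ζ / V ^ 2) :
    ∫ y in (0 : ℝ)..Y, signalDensity μ ζ V y = 0 := by
  have : ∀ y ∈ Set.uIcc (0 : ℝ) Y, signalDensity μ ζ V y = (0 : ℝ) := by
    intro y hy
    rw [signalDensity, if_neg]
    intro hmem
    have hy2 : y ≤ max 0 Y := hy.2
    have : y ≤ Real.cos (π / μ) ^ 2 * ζ / V ^ 2 :=
      le_trans hy2 (max_le hc0 hYc)
    exact absurd hmem.1 (not_lt.2 this)
  rw [intervalIntegral.integral_congr this]
  simp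

/-- Theorem 8: the CDF gap between the per-user interference power and the CUMA
signal power, with `c₀ = cos²(π/μ)·ζ/V²`:
(i) for `0 < Y ≤ c₀`, `F_Y(Y) − F_α(Y) = ∫_0^Y f_Y`;
(ii) for `c₀ < Y < ζ/V²`, `F_Y(Y) − F_α(Y) = (μ/2 − 1)·∫_Y^{ζ/V²} f_Y`;
and in both cases the gap is nonnegative. -/
theorem cuma_cdf_gap (μ : ℕ) (hμ2 : 2 ≤ μ) (hμe : Even μ)
    (ζ V : ℝ) (hζ : 0 < ζ) (hV : 0 < V) :
    (∀ Y : ℝ, 0 < Y → Y ≤ Real.cos (π / μ) ^ 2 * ζ / V ^ 2 →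
      (∫ y in (0 : ℝ)..Y, interferenceDensity ζ V y)
          - (∫ y in (0 : ℝ)..Y, signalDensity μ ζ V y)
        = ∫ y in (0 : ℝ)..Y, interferenceDensity ζ V y) ∧
    (∀ Y : ℝ, Real.cos (π / μ) ^ 2 * ζ / V ^ 2 < Y → Y < ζ / V ^ 2 →
      (∫ y in (0 : ℝ)..Y, interferenceDensity ζ V y)
          - (∫ y in (0 : ℝ)..Y, signalDensity μ ζ V y)
        = ((μ : ℝ) / 2 - 1) * ∫ y in Y..(ζ / V ^ 2), interferenceDensity ζ V y) ∧
    (∀ Y : ℝ, 0 < Y → Y < ζ / V ^ 2 →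
      0 ≤ (∫ y in (0 : ℝ)..Y, interferenceDensity ζ V y)
          - ∫ y in (0 : ℝ)..Y, signalDensity μ ζ V y) := by
  have hb : 0 < ζ / V ^ 2 := div_pos hζ (pow_pos hV 2)
  set c₀ := Real.cos (π / μ) ^ 2 * ζ / V ^ 2 with hc₀def
  have hc0 : 0 ≤ c₀ := by positivity
  have hμ0 : (0:ℝ) < μ := by positivity
  have hc0b : c₀ = Real.cos (π / μ) ^ 2 * (ζ / V ^ 2) := by rw [hc₀def]; ring
  have hGc0 : cumaG (ζ / V ^ 2) c₀ = 1 - 2 / μ := by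
    rw [hc0b]; exact cumaG_c0 hb hμ2
  have hi : ∀ Y : ℝ, 0 < Y → Y ≤ c₀ →
      (∫ y in (0 : ℝ)..Y, interferenceDensity ζ V y)
          - (∫ y in (0 : ℝ)..Y, signalDensity μ ζ V y)
        = ∫ y in (0 : ℝ)..Y, interferenceDensity ζ V y := by
    intro Y _ hYc
    rw [sig_zero_upto hYc hc0, sub_zero]
  have hii : ∀ Y : ℝ, c₀ < Y → Y < ζ / V ^ 2 →
      (∫ y in (0 : ℝ)..Y, interferenceDensity ζ V y)
          - (∫ y in (0 : ℝ)..Y, signalDensity μ ζ V y)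
        = ((μ : ℝ) / 2 - 1) * ∫ y in Y..(ζ / V ^ 2), interferenceDensity ζ V y := by
    intro Y hcY hYb
    have hY0 : 0 < Y := lt_of_le_of_lt hc0 hcY
    -- signal integral computation
    have hadd := intervalIntegral.integral_add_adjacent_intervals
      (a := (0:ℝ)) (b := c₀) (c := Y)
      ((sig_integrable hζ hV (μ := μ)).intervalIntegrable)
      ((sig_integrable hζ hV (μ := μ)).intervalIntegrable)
    have h1 : ∫ y in (0:ℝ)..c₀, signalDensity μ ζ V y = 0 := sig_zero_upto le_rfl hc0
    have h2 : ∫ y in c₀..Y, signalDensity μ ζ V y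
        = (μ : ℝ) / 2 * (cumaG (ζ / V ^ 2) Y - cumaG (ζ / V ^ 2) c₀) := by
      have hcongr : ∫ y in c₀..Y, signalDensity μ ζ V y
          = ∫ y in c₀..Y, (μ : ℝ) / 2 * interferenceDensity ζ V y := by
        apply intervalIntegral.integral_congr_ae
        apply Filter.Eventually.of_forall
        intro x hx
        rw [Set.uIoc_of_le hcY.le] at hx
        have hmem : x ∈ Set.Ioo c₀ (ζ / V ^ 2) := ⟨hx.1, lt_of_le_of_lt hx.2 hYb⟩
        rw [sig_indicator hζ hV, Set.indicator_of_mem hmem]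
      rw [hcongr, intervalIntegral.integral_const_mul,
        interf_integral hζ hV hc0 hcY.le hYb.le]
    have hsig : ∫ y in (0:ℝ)..Y, signalDensity μ ζ V y
        = (μ : ℝ) / 2 * (cumaG (ζ / V ^ 2) Y - cumaG (ζ / V ^ 2) c₀) := by
      rw [← hadd, h1, h2, zero_add]
    rw [hsig, interf_integral hζ hV le_rfl hY0.le hYb.le,
      interf_integral hζ hV hY0.le hYb.le le_rfl, cumaG_zero, cumaG_self hb, hGc0]
    have hμne : (μ : ℝ) ≠ 0 := hμ0.ne'
    field_simp
    ring
  refine ⟨hi, hii, ?_⟩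
  intro Y hY0 hYb
  rcases le_or_gt Y c₀ with h | h
  · rw [hi Y hY0 h]
    exact intervalIntegral.integral_nonneg hY0.le fun y _ => interf_nonneg ζ V y
  · rw [hii Y h hYb]
    apply mul_nonneg
    · have : (2:ℝ) ≤ μ := by exact_mod_cast hμ2
      linarith
    · exact intervalIntegral.integral_nonneg hYb.le fun y _ => interf_nonneg ζ V y
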